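/- Point probabilities of maximum entropy measures. Let 𝒱 = (v^i_j) be an (n,J)-array in ℤ^D and w ∈ ℤ^D with (Jⁿ)^𝒱_w ≠ ∅, and let μ* be any element of ℳ^𝒱_w of maximum entropy. Then every x ∈ (Jⁿ)^𝒱_w satisfies −log₂ μ*(x) ≤ H(μ*). In particular, log₂ |(Jⁿ)^𝒱_w| ≤ H(μ*). -/

import Mathlib

open Finset

noncomputable section

/-- Evaluation of an `(n,J)`-array at `a ∈ Jⁿ`. -/
def arrEval {n D : ℕ} {J : Type*} (V : Fin n → J → Fin D → ℤ)
    (a : Fin n → J) (d : Fin D) : ℤ :=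
  ∑ i, V i (a i) d

/-- Entropy (base 2) of a finitely supported measure. -/
noncomputable def entropy {α : Type*} [Fintype α] (μ : α → ℝ) : ℝ :=
  -∑ x, μ x * Real.logb 2 (μ x)

/-- `μ` is a probability measure on `Jⁿ` with `𝒱(μ) = w`, i.e. `μ ∈ ℳ^𝒱_w`. -/
def MemM {n D : ℕ} {J : Type*} [Fintype J] (V : Fin n → J → Fin D → ℤ)
    (w : Fin D → ℤ) (μ : (Fin n → J) → ℝ) : Prop :=
  (∀ x, 0 ≤ μ x) ∧ (∑ x, μ x = 1) ∧
    ∀ d, ∑ a : Fin n → J, μ a * (arrEval V a d : ℝ) = (w d : ℝ)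

/-- Entropy sum identity for a mixture of `μ` with a point mass at `x`. -/
lemma mix_sum {α : Type*} [Fintype α] [DecidableEq α] (μ : α → ℝ) (x : α) (t : ℝ)
    (ht1 : t < 1) (h1 : ∑ y, μ y = 1) :
    (∑ a, ((1-t)*μ a + if a = x then t else 0) * Real.logb 2 ((1-t)*μ a + if a = x then t else 0))
    = (1-t)*(∑ a, μ a * Real.logb 2 (μ a)) + (1-t)*(1-μ x)*Real.logb 2 (1-t)
      + ((1-t)*μ x+t)*Real.logb 2 ((1-t)*μ x+t) - (1-t)*(μ x*Real.logb 2 (μ x)) := by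
  have ht : (1:ℝ) - t ≠ 0 := by linarith
  rw [← Finset.add_sum_erase _ _ (mem_univ x)]
  rw [← Finset.add_sum_erase univ (fun a => μ a * Real.logb 2 (μ a)) (mem_univ x)]
  have hsum : ∑ a ∈ univ.erase x, μ a = 1 - μ x := by
    rw [Finset.sum_erase_eq_sub (mem_univ x), h1]
  have hterm : ∀ a ∈ univ.erase x,
      ((1-t)*μ a + if a = x then t else 0) * Real.logb 2 ((1-t)*μ a + if a = x then t else 0)
      = μ a * Real.logb 2 (1-t) * (1-t) + (1-t) * (μ a * Real.logb 2 (μ a)) := by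
    intro a ha
    rw [Finset.mem_erase] at ha
    simp only [if_neg ha.1, add_zero]
    by_cases hz : μ a = 0
    · simp [hz]
    · rw [Real.logb_mul ht hz]; ring
  rw [Finset.sum_congr rfl hterm, Finset.sum_add_distrib, ← Finset.sum_mul, ← Finset.mul_sum,
    ← Finset.sum_mul, hsum]
  rw [if_pos rfl]
  ring

/-- Derivative at `0` of the entropy of the mixture curve. -/
lemma mix_hasDerivAt (p H : ℝ) (hp : 0 < p) :
    HasDerivAt (fun t : ℝ => (1-t)*H + (1-t)*(p*Real.logb 2 p) - (1-t)*(1-p)*Real.logb 2 (1-t)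
      - ((1-t)*p+t)*Real.logb 2 ((1-t)*p+t)) (-H - Real.logb 2 p) 0 := by
  have hlog2 : Real.log 2 ≠ 0 := by
    have := Real.log_pos (by norm_num : (1:ℝ) < 2); linarith
  have h1t : HasDerivAt (fun t : ℝ => 1 - t) (-1) 0 := by
    simpa using (hasDerivAt_id (0:ℝ)).const_sub 1
  have hA := h1t.mul_const H
  have hB := h1t.mul_const (p * Real.logb 2 p)
  have hlog1 : HasDerivAt (fun t : ℝ => Real.log (1 - t)) (-1 / (1 - 0)) 0 :=
    h1t.log (by norm_num)
  have hC := (h1t.mul_const (1 - p)).mul (hlog1.div_const (Real.log 2))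
  have hq : HasDerivAt (fun t : ℝ => (1-t)*p + t) (-1*p + 1) 0 :=
    (h1t.mul_const p).add (hasDerivAt_id 0)
  have hqne : (1-(0:ℝ))*p + 0 ≠ 0 := by simpa using hp.ne'
  have hlq := hq.log hqne
  have hD := hq.mul (hlq.div_const (Real.log 2))
  have total := ((hA.add hB).sub hC).sub hD
  have heq : (fun t : ℝ => (1-t)*H + (1-t)*(p*Real.logb 2 p) - (1-t)*(1-p)*Real.logb 2 (1-t)
      - ((1-t)*p+t)*Real.logb 2 ((1-t)*p+t))
      = fun t : ℝ => ((1-t)*H + (1-t)*(p*Real.logb 2 p)) - ((1-t)*(1-p)) * (Real.log (1-t) / Real.log 2)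
      - ((1-t)*p+t) * (Real.log ((1-t)*p+t) / Real.log 2) := by
    funext t; simp only [Real.logb]
  rw [heq]
  refine total.congr_deriv ?_
  simp [Real.logb]
  field_simp
  ring

/-- **Point probabilities of maximum entropy measures.**  If `(Jⁿ)^𝒱_w ≠ ∅` and `μ*`
is an element of `ℳ^𝒱_w` of maximum entropy, then `−log₂ μ*(x) ≤ H(μ*)` for every
`x ∈ (Jⁿ)^𝒱_w`; in particular `log₂ |(Jⁿ)^𝒱_w| ≤ H(μ*)`. -/
theorem point_probabilities_max_entropy
    (n D : ℕ) (J : Type) [Fintype J]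
    (V : Fin n → J → Fin D → ℤ) (w : Fin D → ℤ)
    (hne : {a : Fin n → J | ∀ d, arrEval V a d = w d}.Nonempty)
    (μ : (Fin n → J) → ℝ) (hμ : MemM V w μ)
    (hmax : ∀ ν, MemM V w ν → entropy ν ≤ entropy μ) :
    (∀ x : Fin n → J, (∀ d, arrEval V x d = w d) → -Real.logb 2 (μ x) ≤ entropy μ) ∧
    Real.logb 2 (({a : Fin n → J | ∀ d, arrEval V a d = w d}.ncard : ℝ)) ≤ entropy μ := by
  classical
  obtain ⟨hμ0, hμ1, hμw⟩ := hμ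
  have hμle1 : ∀ y, μ y ≤ 1 := by
    intro y
    calc μ y ≤ ∑ z, μ z := Finset.single_le_sum (fun i _ => hμ0 i) (mem_univ y)
    _ = 1 := hμ1
  have hHnn : 0 ≤ entropy μ := by
    rw [entropy, neg_nonneg]
    apply Finset.sum_nonpos
    intro y _
    rcases eq_or_lt_of_le (hμ0 y) with h | h
    · simp [← h]
    · exact mul_nonpos_of_nonneg_of_nonpos h.le
        (Real.logb_nonpos (by norm_num) (hμ0 y) (hμle1 y))
  constructor
  · -- first part
    intro x hx
    by_cases hp0 : μ x = 0
    · simpa [hp0] using hHnn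
    have hp : 0 < μ x := lt_of_le_of_ne (hμ0 x) (Ne.symm hp0)
    set p := μ x with hpdef
    set H := entropy μ with hHdef
    set F : ℝ → ℝ := fun t => (1-t)*H + (1-t)*(p*Real.logb 2 p) - (1-t)*(1-p)*Real.logb 2 (1-t)
      - ((1-t)*p+t)*Real.logb 2 ((1-t)*p+t) with hFdef
    -- F t is the entropy of the mixture, hence ≤ H
    have hFle : ∀ t ∈ Set.Ico (0:ℝ) 1, F t ≤ H := by
      rintro t ⟨ht0, ht1⟩
      set ν : (Fin n → J) → ℝ := fun a => (1-t)*μ a + if a = x then t else 0 with hνdef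
      have hmem : MemM V w ν := by
        refine ⟨fun a => ?_, ?_, fun d => ?_⟩
        · have := hμ0 a
          by_cases h : a = x <;> simp [hνdef, h] <;> nlinarith
        · rw [hνdef]
          simp only
          rw [Finset.sum_add_distrib, ← Finset.mul_sum, hμ1, Finset.sum_ite_eq' univ x]
          simp
        · rw [hνdef]
          simp only [add_mul]
          rw [Finset.sum_add_distrib]
          have h1 : ∑ a, (1-t)*μ a * (arrEval V a d : ℝ) = (1-t) * (w d : ℝ) := by
            rw [← hμw d, Finset.mul_sum]
            exact Finset.sum_congr rfl (fun a _ => by ring)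
          have h2 : ∑ a, (if a = x then t else 0) * (arrEval V a d : ℝ)
              = t * (w d : ℝ) := by
            have key : ∀ a, (if a = x then t else 0) * (arrEval V a d : ℝ)
                = if a = x then t * (w d : ℝ) else 0 := by
              intro a
              by_cases h : a = x
              · simp [h, hx d]
              · simp [h]
            rw [Finset.sum_congr rfl (fun a _ => key a), Finset.sum_ite_eq' univ x]
            simp
          rw [h1, h2]; ring
      have hent : entropy ν = F t := by
        rw [entropy, hFdef, hνdef]
        simp only
        rw [mix_sum μ x t ht1 hμ1]
        have : ∑ a, μ a * Real.logb 2 (μ a) = -H := by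
          rw [hHdef, entropy]; ring
        rw [this]
        ring
      have := hmax ν hmem
      rw [hent] at this
      exact this
    -- derivative of F at 0 is nonpositive
    have hder := mix_hasDerivAt p H hp
    rw [← hFdef] at hder
    have hF0 : F 0 = H := by
      rw [hFdef]; simp
    have hslope : Filter.Tendsto (slope F 0) (nhdsWithin 0 (Set.Ioi 0))
        (nhds (-H - Real.logb 2 p)) := by
      have := hasDerivAt_iff_tendsto_slope.1 hder
      exact this.mono_left (nhdsWithin_mono 0 (fun y hy => ne_of_gt hy))
    have hle : -H - Real.logb 2 p ≤ 0 := by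
      refine le_of_tendsto hslope ?_
      filter_upwards [self_mem_nhdsWithin,
        Ioo_mem_nhdsGT_of_mem (Set.mem_Ico.2 ⟨le_refl (0:ℝ), one_pos⟩)] with t ht htlt
      have ht0 : (0:ℝ) < t := ht
      have hFt : F t ≤ H := hFle t ⟨ht0.le, htlt.2⟩
      rw [slope_def_field, hF0]
      apply div_nonpos_of_nonpos_of_nonneg
      · linarith
      · simpa using ht0.le
    linarith
  · -- second part
    set A : Finset (Fin n → J) := univ.filter (fun a => ∀ d, arrEval V a d = w d) with hAdef
    have hAset : {a : Fin n → J | ∀ d, arrEval V a d = w d} = ↑A := by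
      ext a; simp [hAdef]
    obtain ⟨a0, ha0⟩ := hne
    have ha0A : a0 ∈ A := by rw [hAdef]; simpa using ha0
    have hApos : 0 < A.card := Finset.card_pos.2 ⟨a0, ha0A⟩
    have hNpos : (0:ℝ) < (A.card : ℝ) := by exact_mod_cast hApos
    set ν : (Fin n → J) → ℝ := fun a => if a ∈ A then ((A.card : ℝ))⁻¹ else 0 with hνdef
    have hmem : MemM V w ν := by
      refine ⟨fun a => ?_, ?_, fun d => ?_⟩
      · rw [hνdef]; dsimp only
        split <;> positivity
      · rw [hνdef]
        simp only
        rw [Finset.sum_ite_mem, Finset.univ_inter, Finset.sum_const]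
        field_simp
        rw [nsmul_eq_mul, one_div, mul_inv_cancel₀ hNpos.ne']
      · rw [hνdef]
        simp only
        have : ∀ a, (if a ∈ A then ((A.card : ℝ))⁻¹ else 0) * (arrEval V a d : ℝ)
            = if a ∈ A then ((A.card : ℝ))⁻¹ * (w d : ℝ) else 0 := by
          intro a
          by_cases h : a ∈ A
          · have : arrEval V a d = w d := by
              rw [hAdef] at h; simp at h; exact h d
            simp [h, this]
          · simp [h]
        rw [Finset.sum_congr rfl (fun a _ => this a)]
        rw [Finset.sum_ite_mem, Finset.univ_inter, Finset.sum_const]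
        rw [nsmul_eq_mul]
        field_simp
    have hent : entropy ν = Real.logb 2 ((A.card : ℝ)) := by
      rw [entropy, hνdef]
      simp only
      have : ∀ a, (if a ∈ A then ((A.card : ℝ))⁻¹ else 0)
          * Real.logb 2 (if a ∈ A then ((A.card : ℝ))⁻¹ else 0)
          = if a ∈ A then ((A.card : ℝ))⁻¹ * Real.logb 2 (((A.card : ℝ))⁻¹) else 0 := by
        intro a; by_cases h : a ∈ A <;> simp [h]
      rw [Finset.sum_congr rfl (fun a _ => this a)]
      rw [Finset.sum_ite_mem, Finset.univ_inter, Finset.sum_const, nsmul_eq_mul]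
      rw [Real.logb_inv]
      field_simp
    have := hmax ν hmem
    rw [hent] at this
    rw [hAset, Set.ncard_coe_finset]
    exact this
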